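/- Let G contain the grid W_r as a minor with branch sets (V_h), and let T be the extension of the natural tangle of W_r to G. Then for every separation (A,B) ∈ T of order s, the small side A intersects at most s² branch sets: |{ h ∈ V(W_r) : V_h ∩ A ≠ ∅ }| ≤ s². -/

import Mathlib

/-- The `r`-grid. -/
def gridGraph (r : ℕ) : SimpleGraph (Fin r × Fin r) where
  Adj v w := Nat.dist v.1.val w.1.val + Nat.dist v.2.val w.2.val = 1
  symm := by
    constructor
    intro v w h
    simpa [Nat.dist_comm] using h
  loopless := by
    constructor
    intro v h
    simp [Nat.dist_self] at h

/-- `(A,B)` is a separation of `G`. -/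
def IsSeparation {V : Type*} [Fintype V] [DecidableEq V]
    (G : SimpleGraph V) (A B : Finset V) : Prop :=
  A ∪ B = Finset.univ ∧
    ∀ a ∈ A, a ∉ B → ∀ b ∈ B, b ∉ A → ¬ G.Adj a b

/-- `B` contains all vertices of some cross. -/
def ContainsCross {r : ℕ} (B : Finset (Fin r × Fin r)) : Prop :=
  ∃ i j : Fin r, ∀ v : Fin r × Fin r, v.1 = i ∨ v.2 = j → v ∈ B

/-- Minor model of `H` in `G`. -/
def IsMinorModel {V W : Type*} [Fintype V] [DecidableEq V]
    (G : SimpleGraph V) (H : SimpleGraph W) (M : W → Finset V) : Prop :=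
  (∀ h, (M h).Nonempty) ∧
  (∀ h, (G.induce (M h : Set V)).Connected) ∧
  (∀ h h', h ≠ h' → Disjoint (M h) (M h')) ∧
  (∀ h h', H.Adj h h' → ∃ a ∈ M h, ∃ b ∈ M h', G.Adj a b)

private lemma fin_walk {r : ℕ} {Q : Fin r → Prop}
    (hstep : ∀ c c' : Fin r, Q c → Nat.dist c.val c'.val = 1 → Q c') :
    ∀ d : ℕ, ∀ b j : Fin r, Nat.dist b.val j.val = d → Q b → Q j := by
  intro d
  induction d with
  | zero =>
    intro b j hd hb
    have : b = j := Fin.ext (Nat.eq_of_dist_eq_zero hd)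
    exact this ▸ hb
  | succ d ih =>
    intro b j hd hb
    rcases Nat.lt_or_ge b.val j.val with hlt | hge
    · have hb' : b.val + 1 < r := lt_of_le_of_lt hlt j.isLt
      have h1 : Nat.dist b.val (b.val + 1) = 1 := by simp [Nat.dist]
      have h2 : Nat.dist (b.val + 1) j.val = d := by
        simp [Nat.dist] at hd ⊢; omega
      exact ih ⟨b.val + 1, hb'⟩ j h2 (hstep b ⟨b.val+1, hb'⟩ hb h1)
    · have hgt : j.val < b.val := by
        rcases Nat.lt_or_ge j.val b.val with h | h
        · exact h
        · have : b.val = j.val := le_antisymm h hge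
          simp [Nat.dist, this] at hd
      have hb' : b.val - 1 < r := lt_of_le_of_lt (Nat.sub_le _ _) b.isLt
      have h1 : Nat.dist b.val (b.val - 1) = 1 := by simp [Nat.dist]; omega
      have h2 : Nat.dist (b.val - 1) j.val = d := by
        simp [Nat.dist] at hd ⊢; omega
      exact ih ⟨b.val - 1, hb'⟩ j h2 (hstep b ⟨b.val-1, hb'⟩ hb h1)

private lemma walk_cut {V : Type*} [Fintype V] [DecidableEq V]
    {G : SimpleGraph V} {A B : Finset V} (hsep : IsSeparation G A B) (s : Set V) :
    ∀ {a b : s} (_ : (G.induce s).Walk a b), ↑a ∈ A → ↑b ∈ B →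
      ∃ c, c ∈ s ∧ c ∈ A ∧ c ∈ B := by
  intro a b w
  induction w with
  | @nil u => exact fun ha hb => ⟨u, u.2, ha, hb⟩
  | @cons u v _ hadj _ ih =>
    intro ha hb
    by_cases huB : ↑u ∈ B
    · exact ⟨u, u.2, ha, huB⟩
    · have hvA : (v : V) ∈ A := by
        by_contra hvA
        have hvB : (v : V) ∈ B := by
          have h1 : (v : V) ∈ A ∪ B := by rw [hsep.1]; exact Finset.mem_univ _
          rcases Finset.mem_union.mp h1 with h | h
          · exact absurd h hvA
          · exact h
        exact hsep.2 u ha huB v hvB hvA hadj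
      exact ih hvA hb

theorem small_side_meets_few_branch_sets {V : Type*} [Fintype V] [DecidableEq V]
    (G : SimpleGraph V) (r : ℕ) (M : Fin r × Fin r → Finset V)
    (hM : IsMinorModel G (gridGraph r) M)
    (A B : Finset V) (hsep : IsSeparation G A B) (hord : (A ∩ B).card < r)
    (hcross : ContainsCross (Finset.univ.filter fun h => (M h ∩ B).Nonempty)) :
    (Finset.univ.filter fun h => (M h ∩ A).Nonempty).card ≤ (A ∩ B).card ^ 2 := by
  classical
  obtain ⟨hne, hconn, hdisj, hadjM⟩ := hM
  obtain ⟨i, j, hij⟩ := hcross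
  have hmemAB : ∀ v : V, v ∈ A ∨ v ∈ B := fun v =>
    Finset.mem_union.mp (by rw [hsep.1]; exact Finset.mem_univ v)
  -- a mixed branch set meets the cut
  have hmix : ∀ h, (M h ∩ A).Nonempty → (M h ∩ B).Nonempty →
      ∃ c, c ∈ M h ∧ c ∈ A ∩ B := by
    intro h ⟨a, ha⟩ ⟨b, hb⟩
    rw [Finset.mem_inter] at ha hb
    have hr : ((G.induce (M h : Set V)).Reachable ⟨a, ha.1⟩ ⟨b, hb.1⟩) :=
      (hconn h).preconnected _ _
    obtain ⟨w⟩ := hr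
    obtain ⟨c, hcS, hcA, hcB⟩ := walk_cut hsep _ w ha.2 hb.2
    exact ⟨c, hcS, Finset.mem_inter.mpr ⟨hcA, hcB⟩⟩
  set Y := Finset.univ.filter
    (fun h : Fin r × Fin r => (M h ∩ A).Nonempty ∧ (M h ∩ B).Nonempty) with hYdef
  -- the mixed set is at most the cut size
  have hYcard : Y.card ≤ (A ∩ B).card := by
    rcases Y.eq_empty_or_nonempty with hY | ⟨h0, hh0⟩
    · simp [hY]
    · have hmixed0 := (Finset.mem_filter.mp hh0).2
      obtain ⟨v0, _⟩ := hmixed0.1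
      have : Nonempty V := ⟨v0⟩
      set f : Fin r × Fin r → V := fun h =>
        if hh : ∃ c, c ∈ M h ∧ c ∈ A ∩ B then hh.choose else Classical.arbitrary V
        with hf
      apply Finset.card_le_card_of_injOn f
      · intro h hh
        have hm := (Finset.mem_filter.mp hh).2
        have hex := hmix h hm.1 hm.2
        simp only [hf, dif_pos hex]
        exact hex.choose_spec.2
      · intro h1 hh1 h2 hh2 heq
        by_contra hne12
        have hm1 := (Finset.mem_filter.mp hh1).2
        have hm2 := (Finset.mem_filter.mp hh2).2
        have hex1 := hmix h1 hm1.1 hm1.2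
        have hex2 := hmix h2 hm2.1 hm2.2
        have e1 : f h1 ∈ M h1 := by simp only [hf, dif_pos hex1]; exact hex1.choose_spec.1
        have e2 : f h2 ∈ M h2 := by simp only [hf, dif_pos hex2]; exact hex2.choose_spec.1
        exact (Finset.disjoint_left.mp (hdisj h1 h2 hne12)) e1 (heq ▸ e2)
  -- neighbor of a pure-A branch set meets A
  have hnb : ∀ h h' : Fin r × Fin r, (gridGraph r).Adj h h' →
      (M h ∩ A).Nonempty → ¬(M h ∩ B).Nonempty → (M h' ∩ A).Nonempty := by
    intro h h' hadj hA hB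
    by_contra hA'
    obtain ⟨a, haM, b, hbM, hGab⟩ := hadjM h h' hadj
    have haB : a ∉ B := fun hx => hB ⟨a, Finset.mem_inter.mpr ⟨haM, hx⟩⟩
    have haA : a ∈ A := (hmemAB a).resolve_right haB
    have hbA : b ∉ A := fun hx => hA' ⟨b, Finset.mem_inter.mpr ⟨hbM, hx⟩⟩
    have hbB : b ∈ B := (hmemAB b).resolve_left hbA
    exact hsep.2 a haA haB b hbB hbA hGab
  have hnomixY : ∀ h : Fin r × Fin r, h ∉ Y →
      ¬((M h ∩ A).Nonempty ∧ (M h ∩ B).Nonempty) := by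
    intro h hh hc
    exact hh (Finset.mem_filter.mpr ⟨Finset.mem_univ _, hc⟩)
  -- every column of the small side contains a mixed vertex in its row
  have hrow : ∀ a b : Fin r, (M (a, b) ∩ A).Nonempty → ∃ c, (a, c) ∈ Y := by
    intro a b hab
    by_contra hno
    push_neg at hno
    have hQj : (M (a, j) ∩ A).Nonempty := by
      refine fin_walk (Q := fun c => (M (a, c) ∩ A).Nonempty) ?_ (Nat.dist b.val j.val)
        b j rfl hab
      intro c c' hc hd
      refine hnb (a, c) (a, c') ?_ hc (fun hB => hnomixY (a, c) (hno c) ⟨hc, hB⟩)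
      show Nat.dist a.val a.val + Nat.dist c.val c'.val = 1
      simp [Nat.dist_self, hd]
    have hBj : (M (a, j) ∩ B).Nonempty :=
      (Finset.mem_filter.mp (hij (a, j) (Or.inr rfl))).2
    exact hnomixY (a, j) (hno j) ⟨hQj, hBj⟩
  have hcol : ∀ a b : Fin r, (M (a, b) ∩ A).Nonempty → ∃ c, (c, b) ∈ Y := by
    intro a b hab
    by_contra hno
    push_neg at hno
    have hQi : (M (i, b) ∩ A).Nonempty := by
      refine fin_walk (Q := fun c => (M (c, b) ∩ A).Nonempty) ?_ (Nat.dist a.val i.val)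
        a i rfl hab
      intro c c' hc hd
      refine hnb (c, b) (c', b) ?_ hc (fun hB => hnomixY (c, b) (hno c) ⟨hc, hB⟩)
      show Nat.dist c.val c'.val + Nat.dist b.val b.val = 1
      simp [Nat.dist_self, hd]
    have hBi : (M (i, b) ∩ B).Nonempty :=
      (Finset.mem_filter.mp (hij (i, b) (Or.inl rfl))).2
    exact hnomixY (i, b) (hno i) ⟨hQi, hBi⟩
  have hsub : (Finset.univ.filter fun h => (M h ∩ A).Nonempty) ⊆
      (Y.image Prod.fst) ×ˢ (Y.image Prod.snd) := by
    intro h hh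
    have hA := (Finset.mem_filter.mp hh).2
    obtain ⟨c1, hc1⟩ := hrow h.1 h.2 hA
    obtain ⟨c2, hc2⟩ := hcol h.1 h.2 hA
    rw [Finset.mem_product]
    exact ⟨Finset.mem_image.mpr ⟨(h.1, c1), hc1, rfl⟩,
      Finset.mem_image.mpr ⟨(c2, h.2), hc2, rfl⟩⟩
  calc (Finset.univ.filter fun h => (M h ∩ A).Nonempty).card
      ≤ ((Y.image Prod.fst) ×ˢ (Y.image Prod.snd)).card := Finset.card_le_card hsub
    _ = (Y.image Prod.fst).card * (Y.image Prod.snd).card := Finset.card_product _ _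
    _ ≤ Y.card * Y.card := Nat.mul_le_mul Finset.card_image_le Finset.card_image_le
    _ ≤ (A ∩ B).card * (A ∩ B).card := Nat.mul_le_mul hYcard hYcard
    _ = (A ∩ B).card ^ 2 := (sq ((A ∩ B).card)).symm
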